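/- Let k ≥ 1, m ≥ 2, let w* ∈ ℝ^m be nonzero, and let M > 0. Suppose w_1, w_2 ∈ ℝ^m satisfy ‖w_1‖ ≥ M and ‖w_2‖ ≥ M, and that there exists a unit vector e orthogonal to w* such that both w_1 and w_2 lie in the half-plane {a·w* + b·e : a ∈ ℝ, b ≥ 0}. Then ‖G(w_1) − G(w_2)‖ ≤ (1 + 3‖w*‖/M)·‖w_1 − w_2‖. -/

import Mathlib

open scoped RealInnerProductSpace
open InnerProductGeometry Real Classical

/-- The ReLU function `σ(z) = max{z, 0}`. -/
noncomputable def relu (z : ℝ) : ℝ := max z 0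

/-- `g u v = (1/(2π))·‖u‖·‖v‖·(sin θ_{u,v} + (π − θ_{u,v})·cos θ_{u,v})`. -/
noncomputable def g {E : Type*} [NormedAddCommGroup E] [InnerProductSpace ℝ E]
    (u v : E) : ℝ :=
  (1 / (2 * π)) * ‖u‖ * ‖v‖ *
    (Real.sin (angle u v) + (π - angle u v) * Real.cos (angle u v))

/-- The no-overlap population loss
`ℓ(w) = (1/k²)·(γ‖w‖² − 2k·g(w,w*) − 2β‖w‖‖w*‖ + γ‖w*‖²)`,
where `β = (k²−k)/(2π)` and `γ = β + k/2`. -/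
noncomputable def nol {m : ℕ} (k : ℕ) (ws : EuclideanSpace ℝ (Fin m))
    (w : EuclideanSpace ℝ (Fin m)) : ℝ :=
  (1 / (k : ℝ) ^ 2) *
    (((((k : ℝ) ^ 2 - k) / (2 * π)) + (k : ℝ) / 2) * ‖w‖ ^ 2
      - 2 * (k : ℝ) * g w ws
      - 2 * (((k : ℝ) ^ 2 - k) / (2 * π)) * ‖w‖ * ‖ws‖
      + ((((k : ℝ) ^ 2 - k) / (2 * π)) + (k : ℝ) / 2) * ‖ws‖ ^ 2)

/-- The gradient of the no-overlap population loss: `G(0) = 0` and, for `w ≠ 0`,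
`G(w) = (1/k²)·[(k + (k²−k)/π − (k‖w*‖ sin θ_{w,w*})/(π‖w‖) − ((k²−k)‖w*‖)/(π‖w‖))·w
        − (k/π)·(π − θ_{w,w*})·w*]`. -/
noncomputable def nG {m : ℕ} (k : ℕ) (ws : EuclideanSpace ℝ (Fin m))
    (w : EuclideanSpace ℝ (Fin m)) : EuclideanSpace ℝ (Fin m) :=
  if w = 0 then 0 else
    (1 / (k : ℝ) ^ 2) •
      ((((k : ℝ) + ((k : ℝ) ^ 2 - k) / π
          - ((k : ℝ) * ‖ws‖ * Real.sin (angle w ws)) / (π * ‖w‖)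
          - (((k : ℝ) ^ 2 - k) * ‖ws‖) / (π * ‖w‖)) • w)
        - (((k : ℝ) / π) * (π - angle w ws)) • ws)

/-- `α(k) = 1/k + (k²−k)/(πk²)`. -/
noncomputable def alphac (k : ℕ) : ℝ := 1 / (k : ℝ) + ((k : ℝ) ^ 2 - k) / (π * (k : ℝ) ^ 2)

lemma sin_lip (a b : ℝ) : |Real.sin a - Real.sin b| ≤ |a - b| := by
  rw [Real.sin_sub_sin]
  calc |2 * Real.sin ((a - b)/2) * Real.cos ((a + b)/2)|
      = 2 * |Real.sin ((a - b)/2)| * |Real.cos ((a + b)/2)| := by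
        rw [abs_mul, abs_mul]; simp
    _ ≤ 2 * |(a - b)/2| * 1 := by
        apply mul_le_mul (by nlinarith [Real.abs_sin_le_abs (x := (a-b)/2)])
          (Real.abs_cos_le_one _) (abs_nonneg _) (by positivity)
    _ = |a - b| := by rw [abs_div]; simp [abs_of_nonneg]; ring

lemma norm_normalize_sub {E : Type*} [NormedAddCommGroup E] [NormedSpace ℝ E]
    (w1 w2 : E) (M : ℝ) (hM : 0 < M) (h1 : M ≤ ‖w1‖) (h2 : M ≤ ‖w2‖) :
    ‖‖w1‖⁻¹ • w1 - ‖w2‖⁻¹ • w2‖ ≤ 2 / M * ‖w1 - w2‖ := by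
  have ha : (0:ℝ) < ‖w1‖ := lt_of_lt_of_le hM h1
  have hb : (0:ℝ) < ‖w2‖ := lt_of_lt_of_le hM h2
  have key : ‖w1‖⁻¹ • w1 - ‖w2‖⁻¹ • w2
      = ‖w1‖⁻¹ • (w1 - w2) + (‖w1‖⁻¹ - ‖w2‖⁻¹) • w2 := by
    rw [smul_sub, sub_smul]; abel
  rw [key]
  have hd : ‖w1‖⁻¹ - ‖w2‖⁻¹ = (‖w2‖ - ‖w1‖)/(‖w1‖ * ‖w2‖) := by field_simp
  have hnn : |‖w2‖ - ‖w1‖| ≤ ‖w1 - w2‖ := by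
    rw [norm_sub_rev]; exact abs_norm_sub_norm_le w2 w1
  calc ‖‖w1‖⁻¹ • (w1 - w2) + (‖w1‖⁻¹ - ‖w2‖⁻¹) • w2‖
      ≤ ‖‖w1‖⁻¹ • (w1 - w2)‖ + ‖(‖w1‖⁻¹ - ‖w2‖⁻¹) • w2‖ := norm_add_le _ _
    _ = ‖w1‖⁻¹ * ‖w1 - w2‖ + |‖w2‖ - ‖w1‖| / (‖w1‖ * ‖w2‖) * ‖w2‖ := by
        rw [norm_smul, norm_smul, Real.norm_eq_abs, Real.norm_eq_abs,
          abs_of_pos (inv_pos.2 ha), hd, abs_div, abs_of_pos (mul_pos ha hb)]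
    _ = ‖w1 - w2‖ / ‖w1‖ + |‖w2‖ - ‖w1‖| / ‖w1‖ := by
        field_simp; try ring
    _ ≤ ‖w1 - w2‖ / ‖w1‖ + ‖w1 - w2‖ / ‖w1‖ := by
        gcongr
    _ ≤ ‖w1 - w2‖ / M + ‖w1 - w2‖ / M := by
        gcongr
    _ = 2 / M * ‖w1 - w2‖ := by ring

lemma angle_le_chord {E : Type*} [NormedAddCommGroup E] [InnerProductSpace ℝ E]
    {u v : E} (hu : u ≠ 0) (hv : v ≠ 0) :
    angle u v ≤ π / 2 * ‖‖u‖⁻¹ • u - ‖v‖⁻¹ • v‖ := by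
  set u' := ‖u‖⁻¹ • u with hu'def
  set v' := ‖v‖⁻¹ • v with hv'def
  have hu1 : ‖u'‖ = 1 := norm_smul_inv_norm (𝕜 := ℝ) hu
  have hv1 : ‖v'‖ = 1 := norm_smul_inv_norm (𝕜 := ℝ) hv
  have hangle : angle u' v' = angle u v := by
    rw [hu'def, hv'def, angle_smul_left_of_pos _ _ (inv_pos.2 (norm_pos_iff.2 hu)),
      angle_smul_right_of_pos _ _ (inv_pos.2 (norm_pos_iff.2 hv))]
  set φ := angle u v with hφdef
  have hφ0 : 0 ≤ φ := angle_nonneg _ _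
  have hφπ : φ ≤ π := angle_le_pi _ _
  have hinner : ⟪u', v'⟫ = Real.cos φ := by
    rw [← cos_angle_mul_norm_mul_norm, hangle, hu1, hv1]; ring
  have hnorm2 : ‖u' - v'‖ ^ 2 = 2 - 2 * Real.cos φ := by
    rw [norm_sub_sq_real, hinner, hu1, hv1]; ring
  have hs0 : 0 ≤ Real.sin (φ/2) := Real.sin_nonneg_of_nonneg_of_le_pi (by linarith) (by linarith)
  have hsq : ‖u' - v'‖ ^ 2 = (2 * Real.sin (φ/2)) ^ 2 := by
    have h := Real.sin_half_eq_sqrt (x := φ) (by linarith) (by linarith)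
    rw [hnorm2, h]
    rw [mul_pow, Real.sq_sqrt (by nlinarith [Real.cos_le_one φ])]
    ring
  have hnormeq : ‖u' - v'‖ = 2 * Real.sin (φ/2) := by
    have := Real.sqrt_sq (norm_nonneg (u' - v'))
    rw [← this, hsq, Real.sqrt_sq (by positivity)]
  have jordan := Real.mul_le_sin (x := φ/2) (by linarith) (by linarith)
  rw [hnormeq]
  calc φ = π * (2 / π * (φ / 2)) := by field_simp; try ring
    _ ≤ π * Real.sin (φ / 2) := by
        exact mul_le_mul_of_nonneg_left jordan Real.pi_pos.le
    _ = π / 2 * (2 * Real.sin (φ / 2)) := by ring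

lemma nG_decomp {E : Type*} [AddCommGroup E] [Module ℝ E]
    (α S1 S2 T1 T2 : ℝ) (u1 u2 ws w1 w2 : E) :
    (α • w1 - S1 • u1 - T1 • ws) - (α • w2 - S2 • u2 - T2 • ws)
      = α • (w1 - w2) - ((S1 - S2) • u1 + S2 • (u1 - u2)) - (T1 - T2) • ws := by
  module

lemma nG_eq {m : ℕ} (k : ℕ) (hk : 1 ≤ k) (ws w : EuclideanSpace ℝ (Fin m)) (hw : w ≠ 0) :
    nG k ws w = alphac k • w
      - ((‖ws‖ * (Real.sin (angle w ws) + ((k:ℝ) - 1)) / (π * k)) • (‖w‖⁻¹ • w))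
      - (((π - angle w ws) / (π * k)) • ws) := by
  have hw' : ‖w‖ ≠ 0 := norm_ne_zero_iff.2 hw
  have hk0 : ((k:ℝ)) ≠ 0 := Nat.cast_ne_zero.2 (by omega)
  have hπ : π ≠ 0 := Real.pi_ne_zero
  rw [nG, if_neg hw, alphac]
  match_scalars <;> (field_simp; try ring)


lemma alphac_nonneg (k : ℕ) (hk : 1 ≤ k) : 0 ≤ alphac k := by
  have hkr : (1:ℝ) ≤ (k:ℝ) := by exact_mod_cast hk
  have hnum : (0:ℝ) ≤ (k:ℝ)^2 - k := by nlinarith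
  rw [alphac]
  exact add_nonneg (by positivity) (div_nonneg hnum (by positivity))

lemma alphac_le_one (k : ℕ) (hk : 1 ≤ k) : alphac k ≤ 1 := by
  have hkr : (1:ℝ) ≤ (k:ℝ) := by exact_mod_cast hk
  have hk0 : (0:ℝ) < (k:ℝ) := by linarith
  have hnum : (0:ℝ) ≤ (k:ℝ)^2 - k := by nlinarith
  have hπ1 : (1:ℝ) ≤ π := by linarith [Real.pi_gt_three]
  rw [alphac]
  have h1 : ((k:ℝ)^2 - k)/(π*(k:ℝ)^2) ≤ ((k:ℝ)^2 - k)/(1*(k:ℝ)^2) := by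
    gcongr <;> nlinarith
  have h2 : ((k:ℝ)^2 - k)/(1*(k:ℝ)^2) = 1 - 1/(k:ℝ) := by field_simp; try ring
  linarith

set_option maxHeartbeats 1000000 in
/-- If `‖w_1‖, ‖w_2‖ ≥ M > 0` and `w_1`, `w_2` lie on the same closed half-plane
`{a·w* + b·e : a ∈ ℝ, b ≥ 0}` determined by a unit vector `e` orthogonal to `w*`, then
`‖G(w_1) − G(w_2)‖ ≤ (1 + 3‖w*‖/M)·‖w_1 − w_2‖`. -/
theorem stmt13 (k m : ℕ) (hk : 1 ≤ k) (hm : 2 ≤ m)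
    (ws : EuclideanSpace ℝ (Fin m)) (hws : ws ≠ 0)
    (M : ℝ) (hM : 0 < M)
    (w1 w2 : EuclideanSpace ℝ (Fin m)) (h1 : M ≤ ‖w1‖) (h2 : M ≤ ‖w2‖)
    (e : EuclideanSpace ℝ (Fin m)) (he : ‖e‖ = 1) (heo : ⟪ws, e⟫ = 0)
    (hw1 : ∃ a b : ℝ, 0 ≤ b ∧ w1 = a • ws + b • e)
    (hw2 : ∃ a b : ℝ, 0 ≤ b ∧ w2 = a • ws + b • e) :
    ‖nG k ws w1 - nG k ws w2‖ ≤ (1 + 3 * ‖ws‖ / M) * ‖w1 - w2‖ := by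
  have hn1 : 0 < ‖w1‖ := lt_of_lt_of_le hM h1
  have hn2 : 0 < ‖w2‖ := lt_of_lt_of_le hM h2
  have hw1n : w1 ≠ 0 := norm_pos_iff.1 hn1
  have hw2n : w2 ≠ 0 := norm_pos_iff.1 hn2
  have hwsn : (0:ℝ) < ‖ws‖ := norm_pos_iff.2 hws
  have hkr : (1:ℝ) ≤ (k:ℝ) := by exact_mod_cast hk
  have hkpos : (0:ℝ) < (k:ℝ) := by linarith
  have hπ3 := Real.pi_gt_three
  have hπpos := Real.pi_pos
  obtain ⟨a1, b1, hb1, he1⟩ := hw1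
  obtain ⟨a2, b2, hb2, he2⟩ := hw2
  have heo' : ⟪e, ws⟫ = (0:ℝ) := by rw [real_inner_comm]; exact heo
  have hee : ⟪e, e⟫ = (1:ℝ) := by
    rw [real_inner_self_eq_norm_sq, he]; norm_num
  have hss : ⟪ws, ws⟫ = ‖ws‖^2 := real_inner_self_eq_norm_sq ws
  have hip1 : ⟪w1, ws⟫ = a1 * ‖ws‖^2 := by
    rw [he1, inner_add_left, real_inner_smul_left, real_inner_smul_left, hss, heo']
    ring
  have hip2 : ⟪w2, ws⟫ = a2 * ‖ws‖^2 := by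
    rw [he2, inner_add_left, real_inner_smul_left, real_inner_smul_left, hss, heo']
    ring
  have hip12 : ⟪w1, w2⟫ = a1*a2*‖ws‖^2 + b1*b2 := by
    rw [he1, he2, inner_add_left, inner_add_right, inner_add_right,
      real_inner_smul_left, real_inner_smul_left, real_inner_smul_left,
      real_inner_smul_left, real_inner_smul_right, real_inner_smul_right,
      real_inner_smul_right, real_inner_smul_right, hss, hee, heo, heo']
    ring
  have hn1sq : ‖w1‖^2 = a1^2*‖ws‖^2 + b1^2 := by
    rw [← real_inner_self_eq_norm_sq, he1, inner_add_left, inner_add_right, inner_add_right,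
      real_inner_smul_left, real_inner_smul_left, real_inner_smul_left,
      real_inner_smul_left, real_inner_smul_right, real_inner_smul_right,
      real_inner_smul_right, real_inner_smul_right, hss, hee, heo, heo']
    ring
  have hn2sq : ‖w2‖^2 = a2^2*‖ws‖^2 + b2^2 := by
    rw [← real_inner_self_eq_norm_sq, he2, inner_add_left, inner_add_right, inner_add_right,
      real_inner_smul_left, real_inner_smul_left, real_inner_smul_left,
      real_inner_smul_left, real_inner_smul_right, real_inner_smul_right,
      real_inner_smul_right, real_inner_smul_right, hss, hee, heo, heo']
    ring
  set θ1 := angle w1 ws with hθ1def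
  set θ2 := angle w2 ws with hθ2def
  have hθ10 : 0 ≤ θ1 := angle_nonneg _ _
  have hθ1π : θ1 ≤ π := angle_le_pi _ _
  have hθ20 : 0 ≤ θ2 := angle_nonneg _ _
  have hθ2π : θ2 ≤ π := angle_le_pi _ _
  have hcos1 : Real.cos θ1 = a1 * ‖ws‖ / ‖w1‖ := by
    rw [hθ1def, cos_angle, hip1]
    field_simp
  have hcos2 : Real.cos θ2 = a2 * ‖ws‖ / ‖w2‖ := by
    rw [hθ2def, cos_angle, hip2]
    field_simp
  have hsin1 : Real.sin θ1 = b1 / ‖w1‖ := by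
    have h := sin_angle_mul_norm_mul_norm w1 ws
    rw [← hθ1def, hip1, real_inner_self_eq_norm_sq, real_inner_self_eq_norm_sq, hn1sq] at h
    rw [show (a1^2*‖ws‖^2 + b1^2) * ‖ws‖^2 - a1*‖ws‖^2*(a1*‖ws‖^2) = (b1*‖ws‖)^2 by ring,
      Real.sqrt_sq (by positivity)] at h
    have : Real.sin θ1 = b1 * ‖ws‖ / (‖w1‖ * ‖ws‖) := by
      rw [← h]; field_simp
    rw [this]; field_simp; try ring
  have hsin2 : Real.sin θ2 = b2 / ‖w2‖ := by
    have h := sin_angle_mul_norm_mul_norm w2 ws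
    rw [← hθ2def, hip2, real_inner_self_eq_norm_sq, real_inner_self_eq_norm_sq, hn2sq] at h
    rw [show (a2^2*‖ws‖^2 + b2^2) * ‖ws‖^2 - a2*‖ws‖^2*(a2*‖ws‖^2) = (b2*‖ws‖)^2 by ring,
      Real.sqrt_sq (by positivity)] at h
    have : Real.sin θ2 = b2 * ‖ws‖ / (‖w2‖ * ‖ws‖) := by
      rw [← h]; field_simp
    rw [this]; field_simp; try ring
  have hangle12 : angle w1 w2 = |θ1 - θ2| := by
    have hc : Real.cos (angle w1 w2) = Real.cos (θ1 - θ2) := by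
      rw [cos_angle, hip12, Real.cos_sub, hcos1, hcos2, hsin1, hsin2]
      field_simp
    have habs : |θ1 - θ2| ≤ π := abs_le.2 ⟨by linarith, by linarith⟩
    calc angle w1 w2 = Real.arccos (Real.cos (angle w1 w2)) :=
          (Real.arccos_cos (angle_nonneg _ _) (angle_le_pi _ _)).symm
      _ = Real.arccos (Real.cos |θ1 - θ2|) := by rw [hc, Real.cos_abs]
      _ = |θ1 - θ2| := Real.arccos_cos (abs_nonneg _) habs
  have hDle : ‖‖w1‖⁻¹ • w1 - ‖w2‖⁻¹ • w2‖ ≤ 2 / M * ‖w1 - w2‖ :=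
    norm_normalize_sub w1 w2 M hM h1 h2
  have hθd : |θ1 - θ2| ≤ π / M * ‖w1 - w2‖ := by
    rw [← hangle12]
    calc angle w1 w2 ≤ π/2 * ‖‖w1‖⁻¹ • w1 - ‖w2‖⁻¹ • w2‖ := angle_le_chord hw1n hw2n
      _ ≤ π/2 * (2/M * ‖w1 - w2‖) := by
          exact mul_le_mul_of_nonneg_left hDle (by positivity)
      _ = π / M * ‖w1 - w2‖ := by ring
  rw [nG_eq k hk ws w1 hw1n, nG_eq k hk ws w2 hw2n, ← hθ1def, ← hθ2def, nG_decomp]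
  set u1 := ‖w1‖⁻¹ • w1 with hu1def
  set u2 := ‖w2‖⁻¹ • w2 with hu2def
  have hu1 : ‖u1‖ = 1 := norm_smul_inv_norm (𝕜 := ℝ) hw1n
  have hu2 : ‖u2‖ = 1 := norm_smul_inv_norm (𝕜 := ℝ) hw2n
  set S1 := ‖ws‖ * (Real.sin θ1 + ((k:ℝ) - 1)) / (π * k) with hS1
  set S2 := ‖ws‖ * (Real.sin θ2 + ((k:ℝ) - 1)) / (π * k) with hS2
  set T1 := (π - θ1) / (π * k) with hT1
  set T2 := (π - θ2) / (π * k) with hT2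
  set Δ := ‖w1 - w2‖ with hΔdef
  have hΔ0 : 0 ≤ Δ := norm_nonneg _
  have halpha0 : 0 ≤ alphac k := alphac_nonneg k hk
  have halpha1 : alphac k ≤ 1 := alphac_le_one k hk
  have hπk : (0:ℝ) < π * k := by positivity
  have hS12 : |S1 - S2| ≤ ‖ws‖ / M * Δ := by
    have heq : S1 - S2 = ‖ws‖ * (Real.sin θ1 - Real.sin θ2) / (π * k) := by
      rw [hS1, hS2]; ring
    rw [heq, abs_div, abs_mul, abs_of_nonneg hwsn.le, abs_of_pos hπk]
    calc ‖ws‖ * |Real.sin θ1 - Real.sin θ2| / (π * k)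
        ≤ ‖ws‖ * (π / M * Δ) / (π * k) := by
          gcongr
          exact le_trans (sin_lip θ1 θ2) hθd
      _ = ‖ws‖ / M * Δ / k := by field_simp; try ring
      _ ≤ ‖ws‖ / M * Δ / 1 := by gcongr
      _ = ‖ws‖ / M * Δ := by ring
  have hsin2nn : 0 ≤ Real.sin θ2 := Real.sin_nonneg_of_nonneg_of_le_pi hθ20 hθ2π
  have hS2b : |S2| ≤ ‖ws‖ / π := by
    rw [hS2, abs_div, abs_mul, abs_of_nonneg hwsn.le, abs_of_pos hπk]
    have hb : |Real.sin θ2 + ((k:ℝ) - 1)| ≤ (k:ℝ) := by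
      rw [abs_of_nonneg (by linarith)]
      have := Real.sin_le_one θ2
      linarith
    calc ‖ws‖ * |Real.sin θ2 + ((k:ℝ) - 1)| / (π * k)
        ≤ ‖ws‖ * (k:ℝ) / (π * k) := by gcongr
      _ = ‖ws‖ / π := by field_simp; try ring
  have hT12 : |T1 - T2| ≤ 1 / M * Δ := by
    have heq : T1 - T2 = (θ2 - θ1) / (π * k) := by rw [hT1, hT2]; ring
    rw [heq, abs_div, abs_of_pos hπk]
    calc |θ2 - θ1| / (π * k) ≤ (π / M * Δ) / (π * k) := by
          gcongr
          rw [abs_sub_comm]; exact hθd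
      _ = 1 / M * Δ / k := by field_simp; try ring
      _ ≤ 1 / M * Δ / 1 := by gcongr
      _ = 1 / M * Δ := by ring
  have hmid : ‖(S1 - S2) • u1 + S2 • (u1 - u2)‖ ≤ ‖ws‖ / M * Δ + ‖ws‖ / π * (2 / M * Δ) := by
    calc ‖(S1 - S2) • u1 + S2 • (u1 - u2)‖
        ≤ ‖(S1 - S2) • u1‖ + ‖S2 • (u1 - u2)‖ := norm_add_le _ _
      _ = |S1 - S2| * ‖u1‖ + |S2| * ‖u1 - u2‖ := by
          rw [norm_smul (S1 - S2) u1, norm_smul S2 (u1 - u2), Real.norm_eq_abs, Real.norm_eq_abs]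
      _ = |S1 - S2| + |S2| * ‖u1 - u2‖ := by rw [hu1, mul_one]
      _ ≤ ‖ws‖ / M * Δ + ‖ws‖ / π * (2 / M * Δ) := by
          gcongr <;> first | exact hS12 | exact hS2b | exact hDle | positivity
  have hfirst : ‖alphac k • (w1 - w2)‖ ≤ Δ := by
    rw [norm_smul, Real.norm_eq_abs, abs_of_nonneg halpha0]
    calc alphac k * Δ ≤ 1 * Δ := mul_le_mul_of_nonneg_right halpha1 hΔ0
      _ = Δ := one_mul Δ
  have hlast : ‖(T1 - T2) • ws‖ ≤ 1 / M * Δ * ‖ws‖ := by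
    rw [norm_smul, Real.norm_eq_abs]
    exact mul_le_mul_of_nonneg_right hT12 (norm_nonneg _)
  have h2π : ‖ws‖ / π * (2 / M * Δ) ≤ ‖ws‖ / M * Δ := by
    have heq : ‖ws‖ / π * (2 / M * Δ) = (2/π) * (‖ws‖ / M * Δ) := by ring
    have h2π1 : 2/π ≤ 1 := by rw [div_le_one hπpos]; linarith
    rw [heq]
    calc (2/π) * (‖ws‖ / M * Δ) ≤ 1 * (‖ws‖ / M * Δ) := by
          exact mul_le_mul_of_nonneg_right h2π1 (by positivity)
      _ = ‖ws‖ / M * Δ := one_mul _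
  calc ‖alphac k • (w1 - w2) - ((S1 - S2) • u1 + S2 • (u1 - u2)) - (T1 - T2) • ws‖
      ≤ ‖alphac k • (w1 - w2) - ((S1 - S2) • u1 + S2 • (u1 - u2))‖ + ‖(T1 - T2) • ws‖ :=
        norm_sub_le _ _
    _ ≤ ‖alphac k • (w1 - w2)‖ + ‖(S1 - S2) • u1 + S2 • (u1 - u2)‖ + ‖(T1 - T2) • ws‖ := by
        have := norm_sub_le (alphac k • (w1 - w2)) ((S1 - S2) • u1 + S2 • (u1 - u2))
        linarith
    _ ≤ Δ + (‖ws‖ / M * Δ + ‖ws‖ / π * (2 / M * Δ)) + 1 / M * Δ * ‖ws‖ := by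
        linarith [hfirst, hmid, hlast]
    _ ≤ Δ + (‖ws‖ / M * Δ + ‖ws‖ / M * Δ) + 1 / M * Δ * ‖ws‖ := by linarith [h2π]
    _ = (1 + 3 * ‖ws‖ / M) * Δ := by field_simp; try ring
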